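/- Let u, v, D be polynomials over ℂ with v ≠ 0, D nonconstant, satisfying u² - D·v² = 1. For each n ≥ 1 define v_n by the formula v_n = ((u + v·√D)^n - (u - v·√D)^n)/(2·√D), computed in the ring ℂ[t][√D] = ℂ[t][X]/(X² - D). Then v_n = v · ∏_{m | n, m > 1} ψ_m(u), where ψ_m(X) = ∏_{ζ : Φ_m(ζ)=0} ((u + v√D) - ζ(u - v√D)) and Φ_m is the m-th cyclotomic polynomial; moreover each ψ_m(u) lies in ℤ[2u] ⊆ ℂ[t]. -/

import Mathlib

open Polynomial

/-- The quadratic extension `ℂ[t][X]/(X² - D)` of `ℂ[t]`. -/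
noncomputable abbrev PellExt (D : Polynomial ℂ) : Type :=
  AdjoinRoot ((X : Polynomial (Polynomial ℂ)) ^ 2 - C D)

/-- The canonical map `ℂ[t] → ℂ[t][√D]`. -/
noncomputable def pellOf (D : Polynomial ℂ) : Polynomial ℂ →+* PellExt D :=
  AdjoinRoot.of _

/-- The square root of `D` in `ℂ[t][√D]`. -/
noncomputable def pellSqrt (D : Polynomial ℂ) : PellExt D :=
  AdjoinRoot.root _

lemma rev_X_sub_C (μ : ℂ) : (X - C μ).reverse = 1 - C μ * X := by
  ext n
  rw [coeff_reverse, natDegree_X_sub_C]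
  match n with
  | 0 => simp
  | 1 => simp [coeff_one]
  | (n+2) => rw [revAt_eq_self_of_lt (by omega : 1 < n + 2)]
             simp [coeff_one, coeff_X, sub_eq_zero]

lemma rev_prod {ι : Type*} (s : Finset ι) (f : ι → Polynomial ℂ) :
    (∏ i ∈ s, f i).reverse = ∏ i ∈ s, (f i).reverse := by
  classical
  induction s using Finset.cons_induction with
  | empty => simp [Polynomial.reverse]
  | cons a s ha ih => rw [Finset.prod_cons, Finset.prod_cons, reverse_mul_of_domain, ih]

lemma cyclo_reverse (m : ℕ) (hm : 1 < m) : (cyclotomic m ℂ).reverse = cyclotomic m ℂ := by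
  have hm0 : m ≠ 0 := by omega
  have hprim := Complex.isPrimitiveRoot_exp m hm0
  have hzero : ∀ μ ∈ primitiveRoots m ℂ, μ ≠ 0 := by
    intro μ hμ
    exact ((mem_primitiveRoots (by omega : 0 < m)).1 hμ).ne_zero hm0
  have hconst : ∏ μ ∈ primitiveRoots m ℂ, (-μ) = 1 := by
    have h0 : (cyclotomic m ℂ).coeff 0 = 1 := cyclotomic_coeff_zero ℂ hm
    rw [cyclotomic_eq_prod_X_sub_primitiveRoots hprim] at h0
    rw [coeff_zero_eq_eval_zero] at h0
    simpa [eval_prod] using h0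
  conv_lhs => rw [cyclotomic_eq_prod_X_sub_primitiveRoots hprim]
  rw [rev_prod]
  have step : ∀ μ ∈ primitiveRoots m ℂ, (X - C μ).reverse = C (-μ) * (X - C μ⁻¹) := by
    intro μ hμ
    rw [rev_X_sub_C, mul_sub, ← C_mul]
    rw [neg_mul, mul_inv_cancel₀ (hzero μ hμ)]
    rw [map_neg, map_neg, map_one]
    ring
  rw [Finset.prod_congr rfl step, Finset.prod_mul_distrib, ← map_prod, hconst, map_one, one_mul]
  have hinv : ∏ μ ∈ primitiveRoots m ℂ, (X - C μ⁻¹) = ∏ μ ∈ primitiveRoots m ℂ, (X - C μ) := by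
    apply Finset.prod_nbij' (fun μ => μ⁻¹) (fun μ => μ⁻¹)
    · intro μ hμ
      rw [mem_primitiveRoots (by omega : 0 < m)] at hμ ⊢
      exact hμ.inv
    · intro μ hμ
      rw [mem_primitiveRoots (by omega : 0 < m)] at hμ ⊢
      exact hμ.inv
    · intro μ hμ; exact inv_inv μ
    · intro μ hμ; exact inv_inv μ
    · intro μ hμ; rfl
  rw [hinv, ← cyclotomic_eq_prod_X_sub_primitiveRoots hprim]

lemma cyclo_palindrome (m : ℕ) (hm : 1 < m) {j : ℕ} (hj : j ≤ m.totient) :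
    (cyclotomic m ℤ).coeff j = (cyclotomic m ℤ).coeff (m.totient - j) := by
  have cast : ∀ i : ℕ, ((cyclotomic m ℤ).coeff i : ℂ) = (cyclotomic m ℂ).coeff i := by
    intro i
    rw [← map_cyclotomic_int m ℂ, coeff_map, eq_intCast]
  have : (cyclotomic m ℂ).coeff j = (cyclotomic m ℂ).coeff (m.totient - j) := by
    conv_lhs => rw [← cyclo_reverse m hm]
    rw [coeff_reverse, natDegree_cyclotomic, revAt_le (by simpa using hj)]
  exact_mod_cast (cast j).trans (this.trans (cast _).symm)

noncomputable def pshi (m : ℕ) : Polynomial ℤ :=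
  ∑ j ∈ Finset.range (m.totient + 1),
    if m.totient < 2 * j then C ((cyclotomic m ℤ).coeff j) * dickson 1 1 (2 * j - m.totient)
    else if 2 * j = m.totient then C ((cyclotomic m ℤ).coeff j) else 0

lemma key (m : ℕ) (hm : 1 < m) {R : Type*} [CommRing R] (a b : R) (hab : a * b = 1) :
    Polynomial.eval (a + b) ((pshi m).map (Int.castRingHom R)) =
      b ^ m.totient * Polynomial.eval (a ^ 2) (cyclotomic m R) := by
  set k := m.totient with hk
  set c : ℕ → R := fun j => ((cyclotomic m ℤ).coeff j : R) with hc
  have hcoeff : ∀ i : ℕ, (cyclotomic m R).coeff i = c i := by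
    intro i; rw [← map_cyclotomic_int m R, coeff_map, eq_intCast]
  have hpow : ∀ j : ℕ, a ^ (2 * j) * b ^ k = if k ≤ 2 * j then a ^ (2 * j - k) else b ^ (k - 2 * j) := by
    intro j
    split_ifs with h
    · have h2 : a ^ (2 * j) = a ^ (2 * j - k) * a ^ k := by rw [← pow_add]; congr 1; omega
      rw [h2, mul_assoc, ← mul_pow, hab, one_pow, mul_one]
    · have h2 : b ^ k = b ^ (k - 2 * j) * b ^ (2 * j) := by rw [← pow_add]; congr 1; omega
      rw [h2, show a ^ (2 * j) * (b ^ (k - 2 * j) * b ^ (2 * j)) = b ^ (k - 2 * j) * (a * b) ^ (2 * j) by ring,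
        hab, one_pow, mul_one]
  have hdeg : (cyclotomic m R).natDegree < k + 1 := by
    have h1 : (cyclotomic m R).natDegree ≤ (cyclotomic m ℤ).natDegree := by
      rw [← map_cyclotomic_int m R]; exact natDegree_map_le
    rw [natDegree_cyclotomic m ℤ] at h1
    omega
  rw [eval_eq_sum_range' hdeg, Finset.mul_sum]
  have rhs_eq : ∀ j ∈ Finset.range (k + 1),
      b ^ k * ((cyclotomic m R).coeff j * (a ^ 2) ^ j) =
        c j * (if k ≤ 2 * j then a ^ (2 * j - k) else b ^ (k - 2 * j)) := by
    intro j _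
    rw [hcoeff, ← pow_mul, ← hpow j]
    ring
  rw [Finset.sum_congr rfl rhs_eq]
  -- LHS
  have lhs_eq : Polynomial.eval (a + b) ((pshi m).map (Int.castRingHom R)) =
      ∑ j ∈ Finset.range (k + 1),
        ((if k < 2 * j then c j * a ^ (2 * j - k) else if 2 * j = k then c j else 0)
          + (if k < 2 * j then c j * b ^ (2 * j - k) else 0)) := by
    rw [pshi, Polynomial.map_sum, eval_finset_sum]
    apply Finset.sum_congr rfl
    intro j _
    simp only [← hk]
    split_ifs with h1 h2
    · rw [Polynomial.map_mul, map_C, map_dickson, map_one, eval_mul, eval_C,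
        dickson_one_one_eval_add_inv a b hab]
      simp only [hc, eq_intCast]
      ring
    · rw [map_C, eval_C]
      simp only [hc, eq_intCast]
      ring
    · simp
  rw [lhs_eq, Finset.sum_add_distrib]
  have refl_eq : ∑ j ∈ Finset.range (k + 1), (if k < 2 * j then c j * b ^ (2 * j - k) else 0)
      = ∑ j ∈ Finset.range (k + 1), (if 2 * j < k then c j * b ^ (k - 2 * j) else 0) := by
    rw [← Finset.sum_range_reflect]
    apply Finset.sum_congr rfl
    intro j hj
    rw [Finset.mem_range] at hj
    rw [show k + 1 - 1 - j = k - j by omega]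
    by_cases h : 2 * j < k
    · rw [if_pos h, if_pos (by omega), show 2 * (k - j) - k = k - 2 * j by omega]
      have hcc := cyclo_palindrome m hm (j := k - j) (by omega)
      rw [show k - (k - j) = j by omega] at hcc
      simp only [hc]
      rw [hcc]
    · rw [if_neg h, if_neg (by omega)]
  rw [refl_eq, ← Finset.sum_add_distrib]
  apply Finset.sum_congr rfl
  intro j hj
  rw [Finset.mem_range] at hj
  rcases lt_trichotomy (2 * j) k with h | h | h
  · rw [if_neg (by omega), if_neg (by omega), if_pos h, if_neg (by omega), zero_add]
  · rw [if_neg (by omega), if_pos h, if_neg (by omega), if_pos (by omega), add_zero,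
      show 2 * j - k = 0 by omega, pow_zero, mul_one]
  · rw [if_pos h, if_neg (by omega), if_pos (by omega), add_zero]

lemma pellSqrt_sq (D : Polynomial ℂ) : pellSqrt D ^ 2 = pellOf D D := by
  have h0 := AdjoinRoot.eval₂_root ((X : Polynomial (Polynomial ℂ)) ^ 2 - C D)
  simp only [eval₂_sub, eval₂_pow, eval₂_X, eval₂_C, sub_eq_zero] at h0
  exact h0

lemma pell_cancel (D : Polynomial ℂ) (hD0 : D ≠ 0) {x y : Polynomial ℂ}
    (h : pellOf D x * (2 * pellSqrt D) = pellOf D y * (2 * pellSqrt D)) : x = y := by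
  by_contra hxy
  set w : Polynomial ℂ := 2 * (x - y) with hw
  have hw0 : w ≠ 0 := mul_ne_zero two_ne_zero (sub_ne_zero.mpr hxy)
  have h2 : pellOf D w * pellSqrt D = 0 := by
    have hcalc : pellOf D w * pellSqrt D =
        pellOf D x * (2 * pellSqrt D) - pellOf D y * (2 * pellSqrt D) := by
      rw [hw, map_mul, map_sub, map_ofNat]
      ring
    rw [hcalc, h, sub_self]
  have h3 : AdjoinRoot.mk ((X : Polynomial (Polynomial ℂ)) ^ 2 - C D) (C w * X) = 0 := by
    rw [map_mul, AdjoinRoot.mk_C, AdjoinRoot.mk_X]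
    exact h2
  rw [AdjoinRoot.mk_eq_zero] at h3
  have hne : (C w * X : Polynomial (Polynomial ℂ)) ≠ 0 := by
    apply mul_ne_zero _ X_ne_zero
    simpa using hw0
  have hle := Polynomial.degree_le_of_dvd h3 hne
  have hdeg2 : ((X : Polynomial (Polynomial ℂ)) ^ 2 - C D).degree = 2 :=
    degree_X_pow_sub_C (by norm_num) D
  have hdeg1 : (C w * X : Polynomial (Polynomial ℂ)).degree = 1 := by
    rw [degree_C_mul_X (by simpa using hw0)]
  rw [hdeg2, hdeg1] at hle
  norm_num at hle

theorem stmt_6 (u v D : Polynomial ℂ) (hv : v ≠ 0) (hD : 1 ≤ D.natDegree)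
    (hPell : u ^ 2 - D * v ^ 2 = 1)
    (vn : ℕ → Polynomial ℂ)
    (hvn : ∀ n : ℕ, 1 ≤ n →
      pellOf D (vn n) * (2 * pellSqrt D) =
        (pellOf D u + pellOf D v * pellSqrt D) ^ n -
        (pellOf D u - pellOf D v * pellSqrt D) ^ n) :
    ∃ ψ : ℕ → Polynomial ℂ,
      (∀ m : ℕ, 1 < m →
        pellOf D (ψ m) =
          ∏ ζ ∈ (Polynomial.cyclotomic m ℂ).roots.toFinset,
            ((pellOf D u + pellOf D v * pellSqrt D) -
              pellOf D (C ζ) * (pellOf D u - pellOf D v * pellSqrt D))) ∧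
      (∀ m : ℕ, 1 < m → ∃ p : Polynomial ℤ,
        ψ m = (p.map (Int.castRingHom ℂ)).comp (2 * u)) ∧
      (∀ n : ℕ, 1 ≤ n →
        vn n = v * ∏ m ∈ n.divisors.filter (fun m => 1 < m), ψ m) := by
  have hD0 : D ≠ 0 := fun h => by simp [h] at hD
  set α : PellExt D := pellOf D u + pellOf D v * pellSqrt D with hα
  set β : PellExt D := pellOf D u - pellOf D v * pellSqrt D with hβ
  have hab : α * β = 1 := by
    have h1 : α * β = pellOf D u ^ 2 - pellOf D v ^ 2 * pellSqrt D ^ 2 := by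
      rw [hα, hβ]; ring
    rw [h1, pellSqrt_sq, ← map_pow, ← map_pow, ← map_mul, ← map_sub,
      show u ^ 2 - v ^ 2 * D = 1 by rw [← hPell]; ring, map_one]
  have hα2β : α ^ 2 * β = α := by
    linear_combination α * hab
  have hβα2 : β * α ^ 2 = α := by
    linear_combination α * hab
  have hsum : pellOf D (2 * u) = α + β := by
    rw [map_mul, map_ofNat, hα, hβ]; ring
  -- the candidate ψ
  set ψ : ℕ → Polynomial ℂ :=
    fun m => ((pshi m).map (Int.castRingHom ℂ)).comp (2 * u) with hψ
  -- Step A: value of ψ m in the Pell extension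
  have stepA : ∀ m : ℕ, 1 < m → pellOf D (ψ m) =
      β ^ m.totient * Polynomial.eval (α ^ 2) (cyclotomic m (PellExt D)) := by
    intro m hm
    have h1 : ψ m = eval₂ (C : ℂ →+* Polynomial ℂ) (2 * u) ((pshi m).map (Int.castRingHom ℂ)) := rfl
    rw [h1, hom_eval₂, eval₂_map]
    have h2 : (((pellOf D).comp (C : ℂ →+* Polynomial ℂ)).comp (Int.castRingHom ℂ)) =
        Int.castRingHom (PellExt D) := Subsingleton.elim _ _
    rw [h2, eval₂_eq_eval_map, hsum]
    exact key m hm α β hab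
  -- Step B: the root product equals the same expression
  have stepB : ∀ m : ℕ, 1 < m →
      (∏ ζ ∈ (Polynomial.cyclotomic m ℂ).roots.toFinset, (α - pellOf D (C ζ) * β)) =
        β ^ m.totient * Polynomial.eval (α ^ 2) (cyclotomic m (PellExt D)) := by
    intro m hm
    haveI : NeZero ((m : ℂ)) := ⟨Nat.cast_ne_zero.mpr (by omega)⟩
    have hm0 : m ≠ 0 := by omega
    have hprim := Complex.isPrimitiveRoot_exp m hm0
    have hroots : (cyclotomic m ℂ).roots.toFinset = primitiveRoots m ℂ := by
      ext a
      rw [Multiset.mem_toFinset, mem_roots (cyclotomic_ne_zero m ℂ),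
        mem_primitiveRoots (by omega : 0 < m), isRoot_cyclotomic_iff]
    rw [hroots]
    have hfac : ∀ ζ ∈ primitiveRoots m ℂ,
        α - pellOf D (C ζ) * β = β * (α ^ 2 - pellOf D (C ζ)) := by
      intro ζ _
      linear_combination -hα2β
    rw [Finset.prod_congr rfl hfac, Finset.prod_mul_distrib, Finset.prod_const,
      hprim.card_primitiveRoots]
    congr 1
    have hcyc : cyclotomic m (PellExt D) =
        ((cyclotomic m ℂ).map ((pellOf D).comp (C : ℂ →+* Polynomial ℂ))) :=
      (map_cyclotomic m _).symm
    rw [hcyc, cyclotomic_eq_prod_X_sub_primitiveRoots hprim, Polynomial.map_prod, eval_prod]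
    apply Finset.prod_congr rfl
    intro ζ _
    rw [Polynomial.map_sub, map_X, map_C, eval_sub, eval_X, eval_C]
    rfl
  -- the divisor-product function
  set g : ℕ → PellExt D := fun m => β ^ m.totient * Polynomial.eval (α ^ 2) (cyclotomic m (PellExt D)) with hg
  have hg1 : pellOf D v * (2 * pellSqrt D) = g 1 := by
    rw [hg]
    simp only [Nat.totient_one, pow_one, cyclotomic_one, eval_sub, eval_X, eval_one]
    rw [mul_sub, mul_one, hβα2, hα, hβ]
    ring
  have hsplitprod : ∀ n : ℕ, 1 ≤ n →
      ∏ m ∈ n.divisors, g m = g 1 * ∏ m ∈ n.divisors.filter (fun m => 1 < m), g m := by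
    intro n hn
    have hfilter : n.divisors.filter (fun m => ¬ 1 < m) = {1} := by
      ext a
      simp only [Finset.mem_filter, Nat.mem_divisors, Finset.mem_singleton, not_lt]
      constructor
      · rintro ⟨⟨hdvd, hn0⟩, hle⟩
        have : a ≠ 0 := by rintro rfl; exact hn0 (Nat.zero_dvd.mp hdvd)
        omega
      · rintro rfl
        exact ⟨⟨one_dvd n, by omega⟩, le_refl 1⟩
    rw [← Finset.prod_filter_mul_prod_filter_not n.divisors (fun m => 1 < m) g, hfilter,
      Finset.prod_singleton, mul_comm]
  have hprodn : ∀ n : ℕ, 1 ≤ n → ∏ m ∈ n.divisors, g m = α ^ n - β ^ n := by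
    intro n hn
    rw [hg]
    simp only []
    rw [Finset.prod_mul_distrib, Finset.prod_pow_eq_pow_sum, Nat.sum_totient, ← eval_prod,
      prod_cyclotomic_eq_X_pow_sub_one (by omega : 0 < n), eval_sub, eval_pow, eval_X, eval_one]
    rw [mul_sub, mul_one, ← mul_pow, hβα2]
  refine ⟨ψ, ?_, ?_, ?_⟩
  · intro m hm
    rw [stepA m hm, ← stepB m hm]
  · intro m hm
    exact ⟨pshi m, rfl⟩
  · intro n hn
    apply pell_cancel D hD0
    rw [hvn n hn]
    have hψg : ∏ m ∈ n.divisors.filter (fun m => 1 < m), pellOf D (ψ m) =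
        ∏ m ∈ n.divisors.filter (fun m => 1 < m), g m := by
      apply Finset.prod_congr rfl
      intro m hm
      rw [Finset.mem_filter] at hm
      exact stepA m hm.2
    rw [map_mul, map_prod, hψg]
    rw [show pellOf D v * (∏ m ∈ n.divisors.filter (fun m => 1 < m), g m) * (2 * pellSqrt D)
        = (pellOf D v * (2 * pellSqrt D)) * ∏ m ∈ n.divisors.filter (fun m => 1 < m), g m by ring,
      hg1, ← hsplitprod n hn, hprodn n hn]
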